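/- arXiv:1703.07313 — 2 statements merged into one kernel-verified Lean document; each statement's English description precedes it below -/
import Mathlib

section
/- If u - φ has a local minimum at x (with u, φ real-valued functions on ℝ^d), y ∈ ℝ^d is a unit vector, u is constant on the segment {x + ty : |t| < ε₀}, and φ is C², then ⟪y, D²φ(x) y⟫ ≤ 0. -/
open Filter Set Topology

abbrev E (d : ℕ) := EuclideanSpace ℝ (Fin d)

/-- 1-D auxiliary lemma: if `g` has derivative `g'` everywhere, `g'` has derivative `Q`
at `0`, `g' 0 = 0` and `g` has a local max at `0`, then `Q ≤ 0`. -/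
lemma aux_one_dim {g g' : ℝ → ℝ} {Q : ℝ}
    (hg : ∀ t, HasDerivAt g (g' t) t)
    (hg' : HasDerivAt g' Q 0) (h0 : g' 0 = 0)
    (hmax : ∀ᶠ t in 𝓝 (0:ℝ), g t ≤ g 0) : Q ≤ 0 := by
  by_contra hQ
  push_neg at hQ
  have hslope : Tendsto (slope g' 0) (𝓝[≠] (0:ℝ)) (𝓝 Q) :=
    hasDerivAt_iff_tendsto_slope.mp hg'
  have hpos : ∀ᶠ t in 𝓝[≠] (0:ℝ), 0 < slope g' 0 t :=
    hslope.eventually (eventually_gt_nhds hQ)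
  have h1 : ∀ᶠ t in 𝓝[≠] (0:ℝ), 0 < slope g' 0 t ∧ g t ≤ g 0 :=
    hpos.and (hmax.filter_mono nhdsWithin_le_nhds)
  rw [eventually_nhdsWithin_iff] at h1
  obtain ⟨δ, hδpos, hδ⟩ := Metric.eventually_nhds_iff.mp h1
  have hgpos : ∀ t ∈ Ioo (0:ℝ) (δ/2), 0 < g' t := by
    intro t ht
    have htne : t ≠ 0 := ne_of_gt ht.1
    have hdist : dist t (0:ℝ) < δ := by
      rw [Real.dist_eq, sub_zero, abs_of_pos ht.1]
      linarith [ht.2]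
    have hsl := (hδ hdist htne).1
    have : slope g' 0 t = g' t / t := by
      simp [slope_def_field, h0]
    rw [this] at hsl
    have := mul_pos hsl ht.1
    rwa [div_mul_cancel₀ _ htne] at this
  have hmono : StrictMonoOn g (Icc (0:ℝ) (δ/2)) := by
    apply strictMonoOn_of_deriv_pos (convex_Icc _ _)
    · exact (continuous_iff_continuousAt.mpr fun t => (hg t).continuousAt).continuousOn
    · intro t ht
      rw [interior_Icc] at ht
      rw [(hg t).deriv]
      exact hgpos t ht
  have hq : (0:ℝ) < δ/2 := by linarith
  have hlt : g 0 < g (δ/2) :=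
    hmono ⟨le_refl 0, le_of_lt hq⟩ ⟨le_of_lt hq, le_refl _⟩ hq
  have hne : (δ/2 : ℝ) ≠ 0 := ne_of_gt hq
  have hdist : dist (δ/2 : ℝ) 0 < δ := by
    rw [Real.dist_eq, sub_zero, abs_of_pos hq]; linarith
  have := (hδ hdist hne).2
  linarith

/-- If u - φ has a local minimum at x, y is a unit vector, u is constant
on the segment {x + ty : |t| < ε₀}, and φ is C², then ⟪y, D²φ(x) y⟫ ≤ 0. -/
theorem hessian_nonpos_of_localmin_constant_segment {d : ℕ} (u φ : E d → ℝ) (x y : E d)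
    (hy : ‖y‖ = 1)
    (hmin : ∀ᶠ z in 𝓝 x, u x - φ x ≤ u z - φ z)
    (ε₀ : ℝ) (hε₀ : 0 < ε₀)
    (hu : ∀ t : ℝ, |t| < ε₀ → u (x + t • y) = u x)
    (hφ : ContDiff ℝ 2 φ) :
    fderiv ℝ (fderiv ℝ φ) x y y ≤ 0 := by
  set g : ℝ → ℝ := fun t => φ (x + t • y) with hgdef
  set g' : ℝ → ℝ := fun t => fderiv ℝ φ (x + t • y) y with hg'def
  have hline : ∀ t : ℝ, HasDerivAt (fun s : ℝ => x + s • y) y t := by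
    intro t
    simpa using ((hasDerivAt_id t).smul_const y).const_add x
  have hφd : Differentiable ℝ φ := hφ.differentiable (by norm_num)
  have hg : ∀ t, HasDerivAt g (g' t) t := fun t =>
    ((hφd (x + t • y)).hasFDerivAt).comp_hasDerivAt t (hline t)
  have hfd : ContDiff ℝ 1 (fderiv ℝ φ) := hφ.fderiv_right (by norm_num)
  have hA : HasDerivAt (fun t : ℝ => fderiv ℝ φ (x + t • y))
      (fderiv ℝ (fderiv ℝ φ) x y) 0 := by
    have h := ((hfd.differentiable (by norm_num) (x + (0:ℝ) • y)).hasFDerivAt).comp_hasDerivAt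
      0 (hline 0)
    simpa [Function.comp_def] using h
  have hg' : HasDerivAt g' (fderiv ℝ (fderiv ℝ φ) x y y) 0 := by
    have h := hA.clm_apply (hasDerivAt_const (0:ℝ) y)
    simpa using h
  have hmax : ∀ᶠ t in 𝓝 (0:ℝ), g t ≤ g 0 := by
    obtain ⟨ε₁, hε₁, hball⟩ := Metric.eventually_nhds_iff.mp hmin
    rw [Metric.eventually_nhds_iff]
    refine ⟨min ε₀ ε₁, lt_min hε₀ hε₁, ?_⟩
    intro t ht
    rw [Real.dist_eq, sub_zero] at ht
    have ht0 : |t| < ε₀ := lt_of_lt_of_le ht (min_le_left _ _)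
    have ht1 : dist (x + t • y) x < ε₁ := by
      rw [dist_eq_norm, add_sub_cancel_left, norm_smul, hy, mul_one]
      exact lt_of_lt_of_le ht (min_le_right _ _)
    have h2 := hball ht1
    rw [hu t ht0] at h2
    simp only [hgdef]
    simp only [zero_smul, add_zero]
    linarith
  have h0 : g' 0 = 0 := by
    have hlm : IsLocalMax g 0 := hmax
    have := hlm.deriv_eq_zero
    rwa [(hg 0).deriv] at this
  exact aux_one_dim hg hg' h0 hmax
end

section
/- Let d ≥ 2, Ω the open half-space {x₁ > 0}, and H(A) = sup_{B ∈ S₁}(−B : A) (the Monge–Ampère HJB operator with f = 0). For c > 0 let v_c equal 0 on Ω and −c on the boundary {x₁ = 0}. Then v_c is a viscosity supersolution in the Barles–Souganidis sense: for every C² function φ on Ω̄ such that (v_c)_* − φ has a local minimum at x ∈ Ω̄, one has max{H(D²φ(x)), (v_c)_*(x)} ≥ 0 if x ∈ ∂Ω, and H(D²φ(x)) ≥ 0 if x ∈ Ω. -/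
open Filter Set Topology Matrix



lemma second_deriv_test {g g' : ℝ → ℝ} {m : ℝ} (hg' : ∀ t, HasDerivAt g (g' t) t)
    (hg'' : HasDerivAt g' m 0) (hmax : IsLocalMax g 0) : m ≤ 0 := by
  by_contra h
  push_neg at h
  have h0 : g' 0 = 0 := by rw [← (hg' 0).deriv]; exact hmax.deriv_eq_zero
  have hs : Tendsto (slope g' 0) (𝓝[≠] 0) (𝓝 m) := hasDerivAt_iff_tendsto_slope.mp hg''
  have hgt : ∀ᶠ t in 𝓝[≠] (0:ℝ), 0 < slope g' 0 t := hs.eventually (lt_mem_nhds h)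
  have hmono' : 𝓝[>] (0:ℝ) ≤ 𝓝[≠] (0:ℝ) :=
    nhdsWithin_mono 0 (fun t ht => ne_of_gt ht)
  have hpos : ∀ᶠ t in 𝓝[>] (0:ℝ), 0 < g' t := by
    filter_upwards [hgt.filter_mono hmono', self_mem_nhdsWithin] with t h1 h2
    have h2' : (0:ℝ) < t := h2
    have : slope g' 0 t = g' t / t := by simp [slope_def_field, h0]
    rw [this] at h1
    have := mul_pos h1 h2'
    rwa [div_mul_cancel₀ _ (ne_of_gt h2')] at this
  obtain ⟨u, hu, hsub⟩ := mem_nhdsGT_iff_exists_Ioo_subset.mp hpos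
  obtain ⟨ε, hε, hm'⟩ := Metric.eventually_nhds_iff.mp hmax
  set t := min u ε / 2 with htdef
  have hu0 : (0:ℝ) < u := hu
  have ht0 : 0 < t := by positivity
  have htu : t < u := by
    have : min u ε ≤ u := min_le_left _ _
    simp only [htdef]; linarith
  have htε : t < ε := by
    have : min u ε ≤ ε := min_le_right _ _
    simp only [htdef]; linarith
  have hcont : ContinuousOn g (Icc 0 t) := fun y _ =>
    (hg' y).differentiableAt.continuousAt.continuousWithinAt
  have hmono := strictMonoOn_of_deriv_pos (convex_Icc 0 t) hcont (fun y hy => by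
    rw [interior_Icc] at hy
    rw [(hg' y).deriv]
    exact hsub ⟨hy.1, lt_trans hy.2 htu⟩)
  have h1 : g 0 < g t := hmono (left_mem_Icc.mpr ht0.le) (right_mem_Icc.mpr ht0.le) ht0
  have h2 : g t ≤ g 0 := hm' (by simpa [abs_of_pos ht0] using htε)
  linarith

def S1 (d : ℕ) : Set (Matrix (Fin d) (Fin d) ℝ) := {B | B.PosSemidef ∧ B.trace = 1}

def frob {d : ℕ} (B A : Matrix (Fin d) (Fin d) ℝ) : ℝ := (Bᵀ * A).trace

/-- The HJB operator H(A) = sup_{B ∈ S₁} (−B : A + f √(det B)); here used with f = 0. -/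
noncomputable def Hop {d : ℕ} (f : ℝ) (A : Matrix (Fin d) (Fin d) ℝ) : ℝ :=
  sSup ((fun B => -frob B A + f * Real.sqrt B.det) '' S1 d)

/-- The Hessian matrix D²φ(x) in the standard basis. -/
noncomputable def hessMat {d : ℕ} (φ : E d → ℝ) (x : E d) : Matrix (Fin d) (Fin d) ℝ :=
  Matrix.of fun i j =>
    fderiv ℝ (fderiv ℝ φ) x (EuclideanSpace.single i 1) (EuclideanSpace.single j 1)

/-- The closed half-space Ω̄ = {x : x₁ ≥ 0}. -/
def Obar (d : ℕ) [NeZero d] : Set (E d) := {x | 0 ≤ x 0}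

/-- v_c: 0 in the open half-space, −c on the boundary; it equals its own lsc envelope. -/
noncomputable def vC {d : ℕ} [NeZero d] (c : ℝ) (x : E d) : ℝ :=
  if x 0 = 0 then -c else 0

/-- v_c is a viscosity supersolution in the Barles–Souganidis sense of
H(D²u) = 0 with homogeneous Dirichlet data on the half-space. -/
theorem vC_is_supersolution {d : ℕ} [NeZero d] (hd : 2 ≤ d) (c : ℝ) (hc : 0 < c)
    (φ : E d → ℝ) (hφ : ContDiff ℝ 2 φ) (x : E d) (hx : x ∈ Obar d)
    (hmin : ∃ r > 0, ∀ z ∈ Obar d, ‖z - x‖ < r → vC c x - φ x ≤ vC c z - φ z) :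
    (x 0 = 0 → 0 ≤ max (Hop 0 (hessMat φ x)) (vC c x)) ∧
    (0 < x 0 → 0 ≤ Hop 0 (hessMat φ x)) := by
  -- the tangential direction e₁
  have h10 : (1 : Fin d) ≠ 0 := by
    have : ((1 : Fin d) : ℕ) = 1 := by
      simp [Fin.val_one', Nat.mod_eq_of_lt (lt_of_lt_of_le one_lt_two hd)]
    intro h
    rw [h] at this
    simp at this
  set v : E d := EuclideanSpace.single (1 : Fin d) (1 : ℝ) with hv
  have hv0 : v 0 = 0 := by simp [hv, EuclideanSpace.single_apply, h10.symm]
  have hvnorm : ‖v‖ = 1 := by simp [hv, EuclideanSpace.norm_single]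
  -- φ is differentiable, its derivative too
  have hφ1 : Differentiable ℝ φ := hφ.differentiable (by norm_num)
  have hφ2 : Differentiable ℝ (fderiv ℝ φ) :=
    (hφ.fderiv_right (by norm_num : (1:WithTop ℕ∞) + 1 ≤ 2)).differentiable one_ne_zero
  set f1 := fderiv ℝ φ with hf1
  -- the line
  set L : ℝ → E d := fun t => x + t • v with hL
  have hL0 : L 0 = x := by simp [hL]
  have hLd : ∀ t, HasDerivAt L v t := by
    intro t
    simpa [hL] using ((hasDerivAt_id t).smul_const v).const_add x
  have hLcoord : ∀ t, (L t) 0 = x 0 := by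
    intro t; simp [hL, hv0]
  set g : ℝ → ℝ := fun t => φ (L t) with hg
  set g' : ℝ → ℝ := fun t => f1 (L t) v with hg'def
  have hgd : ∀ t, HasDerivAt g (g' t) t := fun t =>
    ((hφ1 (L t)).hasFDerivAt).comp_hasDerivAt t (hLd t)
  have hgd2 : HasDerivAt g' ((fderiv ℝ f1 x v) v) 0 := by
    have h1 : HasDerivAt (fun t => f1 (L t)) (fderiv ℝ f1 x v) 0 := by
      have hfd : HasFDerivAt f1 (fderiv ℝ f1 x) (L 0) := by
        rw [hL0]; exact (hφ2 x).hasFDerivAt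
      exact hfd.comp_hasDerivAt 0 (hLd 0)
    have := ((ContinuousLinearMap.apply ℝ ℝ v).hasFDerivAt).comp_hasDerivAt 0 h1
    exact this
  -- local max of g at 0
  obtain ⟨r, hr, hminr⟩ := hmin
  have hmax : IsLocalMax g 0 := by
    rw [IsLocalMax, IsMaxFilter, Metric.eventually_nhds_iff]
    refine ⟨r, hr, fun t ht => ?_⟩
    have hmem : L t ∈ Obar d := by
      simp only [Obar, mem_setOf_eq, hLcoord t]; exact hx
    have hnorm : ‖L t - x‖ < r := by
      have : L t - x = t • v := by simp [hL]
      rw [this, norm_smul, hvnorm, mul_one]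
      simpa [Real.dist_eq] using ht
    have hvc : vC c (L t) = vC c x := by simp [vC, hLcoord t]
    have := hminr (L t) hmem hnorm
    rw [hvc] at this
    simp only [hg, hL0]
    linarith
  have hkey : fderiv ℝ f1 x v v ≤ 0 := second_deriv_test hgd hgd2 hmax
  -- the witness matrix
  set B : Matrix (Fin d) (Fin d) ℝ := Matrix.diagonal (Pi.single (1 : Fin d) (1:ℝ)) with hB
  have hBS : B ∈ S1 d := by
    constructor
    · exact Matrix.posSemidef_diagonal_iff.mpr fun i => by
        by_cases h : i = 1 <;> simp [Pi.single_apply, h]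
    · simp [hB, Matrix.trace_diagonal]
  have hfrob : frob B (hessMat φ x) = fderiv ℝ f1 x v v := by
    simp only [frob, hB, Matrix.diagonal_transpose, Matrix.trace, Matrix.diag,
      Matrix.mul_apply, Matrix.diagonal_apply]
    rw [Finset.sum_comm]
    simp only [Pi.single_apply, ite_mul, one_mul, zero_mul, Finset.sum_ite_eq',
      Finset.mem_univ, if_true, Finset.sum_ite_eq, hessMat, Matrix.of_apply]
    rfl
  have hHop : 0 ≤ Hop 0 (hessMat φ x) := by
    apply Real.sSup_nonneg'
    exact ⟨-frob B (hessMat φ x) + 0 * Real.sqrt B.det, ⟨B, hBS, rfl⟩, by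
      rw [hfrob]; linarith⟩
  exact ⟨fun _ => le_max_of_le_left hHop, fun _ => hHop⟩
end
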